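/- Let n ≥ 3 and k ≥ 2. The minimum over [-1,1] of A₁Pⁿₖ(t) = Pⁿₖ(t) - t·(Pⁿₖ)'(t) equals its value at t = 1, namely -(k-1)(k+n-1)/(n-1). -/

import Mathlib

open Polynomial

/-- A polynomial solution of `(1-X²)W' = c X W` with `c > 0` is zero. -/
lemma aux_W_zero {c : ℝ} (hc : 0 < c) (W : ℝ[X])
    (hW : (1 - X ^ 2) * derivative W = C c * (X * W)) : W = 0 := by
  by_contra h0
  rcases Nat.eq_zero_or_pos W.natDegree with hd | hd
  · have hC := Polynomial.eq_C_of_natDegree_eq_zero hd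
    rw [hC, derivative_C, mul_zero] at hW
    have h2 : C c * (X * C (W.coeff 0)) = 0 := hW.symm
    simp only [mul_eq_zero, Polynomial.C_eq_zero, Polynomial.X_ne_zero, false_or] at h2
    rcases h2 with h | h
    · exact hc.ne' h
    · exact h0 (by rw [hC, h, map_zero])
  · set d := W.natDegree with hdd
    have hcoeff := congrArg (fun p => Polynomial.coeff p (d + 1)) hW
    simp only [sub_mul, one_mul, Polynomial.coeff_sub, Polynomial.coeff_C_mul,
      Polynomial.coeff_X_mul] at hcoeff
    have e1 : (derivative W).coeff (d + 1) = 0 := by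
      rw [Polynomial.coeff_derivative]
      have : W.coeff (d + 1 + 1) = 0 :=
        Polynomial.coeff_eq_zero_of_natDegree_lt (by omega)
      rw [this, zero_mul]
    have e2 : (X ^ 2 * derivative W).coeff (d + 1) = W.coeff d * d := by
      have h1 : d + 1 = (d - 1) + 2 := by omega
      rw [h1, Polynomial.coeff_X_pow_mul, Polynomial.coeff_derivative]
      have h2 : (d - 1) + 1 = d := by omega
      rw [h2]
      congr 1
      rw [Nat.cast_sub (by omega : 1 ≤ d)]
      push_cast; ring
    rw [e1, e2] at hcoeff
    have hlc : W.coeff d ≠ 0 := Polynomial.leadingCoeff_ne_zero.mpr h0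
    have hmul : W.coeff d * (c + d) = 0 := by linarith [hcoeff]
    have hcd : (0:ℝ) < c + d := by positivity
    exact hlc ((mul_eq_zero.mp hmul).resolve_right hcd.ne')

lemma aux_const_of_selfdvd {p₁ : ℝ[X]} (hdvd : p₁ ∣ derivative p₁) :
    p₁ = C (p₁.coeff 0) := by
  have hd0 : p₁.natDegree = 0 := by
    by_cases hne : derivative p₁ = 0
    · exact Polynomial.natDegree_eq_zero_of_derivative_eq_zero hne
    · have h1 := Polynomial.natDegree_le_of_dvd hdvd hne
      have h2 := Polynomial.natDegree_derivative_lt (p := p₁)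
        (fun h => hne (by rw [Polynomial.eq_C_of_natDegree_eq_zero h]; simp))
      omega
  exact Polynomial.eq_C_of_natDegree_eq_zero hd0

/-- If `p q' = p' q` with `p ≠ 0`, then `q = C c * p`. -/
lemma aux_prop {p q : ℝ[X]} (hp : p ≠ 0)
    (h : p * derivative q = derivative p * q) : ∃ c : ℝ, q = C c * p := by
  rcases eq_or_ne q 0 with rfl | hq
  · exact ⟨0, by simp⟩
  set g := GCDMonoid.gcd p q with hg
  have hg0 : g ≠ 0 := gcd_ne_zero_of_left hp
  set p₁ := p / g with hp₁def
  set q₁ := q / g with hq₁def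
  have hp₁ : p = g * p₁ := (EuclideanDomain.mul_div_cancel' hg0 (gcd_dvd_left p q)).symm
  have hq₁ : q = g * q₁ := (EuclideanDomain.mul_div_cancel' hg0 (gcd_dvd_right p q)).symm
  have hco : IsCoprime p₁ q₁ := isCoprime_div_gcd_div_gcd hq
  have hp₁0 : p₁ ≠ 0 := fun h0 => hp (by rw [hp₁, h0, mul_zero])
  have hq₁0 : q₁ ≠ 0 := fun h0 => hq (by rw [hq₁, h0, mul_zero])
  rw [hp₁, hq₁, derivative_mul, derivative_mul] at h
  have key : p₁ * derivative q₁ = derivative p₁ * q₁ := by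
    have h2 : g * g * (p₁ * derivative q₁ - derivative p₁ * q₁) = 0 := by
      ring_nf; linear_combination h
    have h3 := (mul_eq_zero.mp h2).resolve_left (mul_ne_zero hg0 hg0)
    exact sub_eq_zero.mp h3
  have hdp : p₁ ∣ derivative p₁ :=
    hco.dvd_of_dvd_mul_right ⟨derivative q₁, key.symm⟩
  have hdq : q₁ ∣ derivative q₁ :=
    hco.symm.dvd_of_dvd_mul_right ⟨derivative p₁, by linear_combination key⟩
  have hpc := aux_const_of_selfdvd hdp
  have hqc := aux_const_of_selfdvd hdq
  set c₁ := p₁.coeff 0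
  set c₂ := q₁.coeff 0
  have hc₁ : c₁ ≠ 0 := fun h0 => hp₁0 (by rw [hpc, h0, map_zero])
  refine ⟨c₂ / c₁, ?_⟩
  rw [hq₁, hp₁, hqc, hpc]
  rw [show (C (c₂ / c₁) * (g * C c₁)) = g * (C (c₂/c₁) * C c₁) by ring, ← map_mul,
    div_mul_cancel₀ _ hc₁]

lemma aux_wronskian {a lam : ℝ} (p q : ℝ[X])
    (hp : (1 - X ^ 2) * derivative (derivative p) - C a * (X * derivative p) + C lam * p = 0)
    (hq : (1 - X ^ 2) * derivative (derivative q) - C a * (X * derivative q) + C lam * q = 0)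
    (hWzero : ∀ W : ℝ[X], (1 - X ^ 2) * derivative W = C a * (X * W) → W = 0) :
    p * derivative q = derivative p * q := by
  set W : ℝ[X] := p * derivative q - derivative p * q with hW
  have key : (1 - X ^ 2) * derivative W = C a * (X * W) := by
    rw [hW, derivative_sub, derivative_mul, derivative_mul]
    linear_combination p * hq - q * hp
  have := hWzero W key
  rw [hW] at this
  exact sub_eq_zero.mp this

lemma aux_comp_ode {a lam : ℝ} (q : ℝ[X])
    (hq : (1 - X ^ 2) * derivative (derivative q) - C a * (X * derivative q) + C lam * q = 0) :
    (1 - X ^ 2) * derivative (derivative (q.comp (-X)))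
      - C a * (X * derivative (q.comp (-X))) + C lam * (q.comp (-X)) = 0 := by
  have hd1 : derivative (q.comp (-X)) = -((derivative q).comp (-X)) := by
    rw [derivative_comp]; simp
  have hd2 : derivative (derivative (q.comp (-X))) =
      (derivative (derivative q)).comp (-X) := by
    rw [hd1, derivative_neg, derivative_comp]; simp
  rw [hd2, hd1]
  have hcomp := congrArg (fun r => r.comp (-X : ℝ[X])) hq
  simp only [add_comp, sub_comp, mul_comp, one_comp, pow_comp, X_comp, C_comp,
    zero_comp, neg_comp] at hcomp
  linear_combination hcomp

lemma aux_bound {a lam : ℝ} (ha : 2 ≤ a) (hlam : 0 < lam) (q : ℝ[X])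
    (hE : (1 - X ^ 2) * derivative (derivative q) - C a * (X * derivative q) + C lam * q = 0)
    (h1 : (q.eval 1) ^ 2 ≤ 1) (hm1 : (q.eval (-1)) ^ 2 ≤ 1) :
    ∀ t ∈ Set.Icc (-1:ℝ) 1, (q.eval t) ^ 2 ≤ 1 := by
  set U : ℝ[X] := C lam * q ^ 2 + (1 - X ^ 2) * (derivative q) ^ 2 with hU
  have hU' : derivative U = C (2 * (a - 1)) * (X * (derivative q) ^ 2) := by
    rw [hU]
    rw [derivative_add, derivative_mul, derivative_mul, derivative_pow, derivative_pow]
    simp only [derivative_C, derivative_sub, derivative_one, derivative_X_pow, map_sub, map_mul,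
      map_ofNat, map_one, Nat.cast_ofNat]
    ring_nf
    linear_combination (2 * derivative q) * hE
  have hderiv : ∀ t : ℝ, deriv (fun s => U.eval s) t
      = 2 * (a - 1) * (t * ((derivative q).eval t) ^ 2) := by
    intro t
    rw [Polynomial.deriv, hU']
    simp [mul_assoc]
  have hmono : MonotoneOn (fun s : ℝ => U.eval s) (Set.Icc 0 1) := by
    apply monotoneOn_of_deriv_nonneg (convex_Icc _ _) U.continuousOn
      ((U.differentiable).differentiableOn)
    intro x hx
    rw [interior_Icc] at hx
    rw [hderiv x]
    have hx0 : (0:ℝ) ≤ x := le_of_lt hx.1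
    have ha1 : (0:ℝ) ≤ 2 * (a - 1) := by linarith
    exact mul_nonneg ha1 (mul_nonneg hx0 (sq_nonneg _))
  have hanti : AntitoneOn (fun s : ℝ => U.eval s) (Set.Icc (-1) 0) := by
    apply antitoneOn_of_deriv_nonpos (convex_Icc _ _) U.continuousOn
      ((U.differentiable).differentiableOn)
    intro x hx
    rw [interior_Icc] at hx
    rw [hderiv x]
    have hx0 : x ≤ 0 := le_of_lt hx.2
    have h1 : (0:ℝ) ≤ 2 * (a - 1) := by linarith
    nlinarith [mul_nonneg h1 (mul_nonneg (neg_nonneg.mpr hx0) (sq_nonneg ((derivative q).eval x)))]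
  have hUval : ∀ t : ℝ, U.eval t
      = lam * (q.eval t) ^ 2 + (1 - t ^ 2) * ((derivative q).eval t) ^ 2 := by
    intro t; rw [hU]; simp
  have hU1 : U.eval 1 ≤ lam := by rw [hUval]; nlinarith
  have hUm1 : U.eval (-1) ≤ lam := by rw [hUval]; nlinarith
  intro t ht
  have hub : U.eval t ≤ lam := by
    rcases le_total t 0 with h | h
    · have h2 := hanti (Set.mem_Icc.mpr ⟨le_refl (-1:ℝ), by norm_num⟩)
        (Set.mem_Icc.mpr ⟨ht.1, h⟩) ht.1
      simp only at h2
      linarith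
    · have h2 := hmono (Set.mem_Icc.mpr ⟨h, ht.2⟩)
        (Set.mem_Icc.mpr ⟨zero_le_one, le_refl 1⟩) ht.2
      simp only at h2
      linarith
  have hlow : lam * (q.eval t) ^ 2 ≤ U.eval t := by
    rw [hUval]
    nlinarith [mul_nonneg (by nlinarith [ht.1, ht.2] : (0:ℝ) ≤ 1 - t^2)
      (sq_nonneg ((derivative q).eval t))]
  nlinarith

/-- `p` is the Legendre polynomial of dimension `n` and degree `k`: it is a polynomial
function, normalized by `p 1 = 1`, satisfying the Legendre ODE
`(1-t²)y'' - (n-1)t·y' + k(k+n-2)y = 0`. -/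
def IsLegendre (n k : ℕ) (p : ℝ → ℝ) : Prop :=
  (∃ q : Polynomial ℝ, ∀ t, p t = q.eval t) ∧ p 1 = 1 ∧
    ∀ t : ℝ, (1 - t ^ 2) * iteratedDeriv 2 p t - ((n : ℝ) - 1) * t * deriv p t +
      (k : ℝ) * ((k : ℝ) + (n : ℝ) - 2) * p t = 0

set_option maxHeartbeats 1000000 in
/-- For `n ≥ 3` and `k ≥ 2`, the minimum over `[-1,1]` of
`A₁Pⁿₖ(t) = Pⁿₖ(t) - t·(Pⁿₖ)'(t)` is attained at `t = 1`, where its value equals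
`-(k-1)(k+n-1)/(n-1)`. -/
theorem legendre_A1_min (n k : ℕ) (hn : 3 ≤ n) (hk : 2 ≤ k)
    (P : ℝ → ℝ) (hP : IsLegendre n k P) :
    (∀ t ∈ Set.Icc (-1 : ℝ) 1,
        -((((k : ℝ) - 1) * ((k : ℝ) + (n : ℝ) - 1)) / ((n : ℝ) - 1)) ≤ P t - t * deriv P t) ∧
      P 1 - 1 * deriv P 1 = -((((k : ℝ) - 1) * ((k : ℝ) + (n : ℝ) - 1)) / ((n : ℝ) - 1)) := by
  obtain ⟨⟨q, hq⟩, hP1, hODE⟩ := hP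
  have hPfun : P = fun t => q.eval t := funext hq
  subst hPfun
  -- numeric facts
  set a : ℝ := (n : ℝ) - 1 with hadef
  set lam : ℝ := (k : ℝ) * ((k : ℝ) + (n : ℝ) - 2) with hlamdef
  have hn3 : (3:ℝ) ≤ (n:ℝ) := by exact_mod_cast hn
  have hk2 : (2:ℝ) ≤ (k:ℝ) := by exact_mod_cast hk
  have ha2 : 2 ≤ a := by rw [hadef]; linarith
  have ha0 : 0 < a := by linarith
  have hlam2a : 2 * a ≤ lam := by rw [hlamdef, hadef]; nlinarith
  have hlam : 0 < lam := by linarith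
  -- the polynomial ODE
  have hE : (1 - X ^ 2) * derivative (derivative q)
      - C a * (X * derivative q) + C lam * q = 0 := by
    apply Polynomial.funext
    intro t
    have h1 : deriv (fun s : ℝ => q.eval s) = fun s => (derivative q).eval s := by
      funext s; exact Polynomial.deriv q
    have h2 : iteratedDeriv 2 (fun s : ℝ => q.eval s) t
        = (derivative (derivative q)).eval t := by
      rw [show (2:ℕ) = 1 + 1 from rfl, iteratedDeriv_succ, iteratedDeriv_one, h1]
      exact Polynomial.deriv _
    have h3 := hODE t
    simp only [h2, h1] at h3
    simp only [eval_add, eval_sub, eval_mul, eval_one, eval_pow, eval_X, eval_C, eval_zero]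
    linarith [h3]
  have hEt : ∀ t : ℝ, (1 - t ^ 2) * (derivative (derivative q)).eval t
      - a * (t * (derivative q).eval t) + lam * q.eval t = 0 := by
    intro t
    have := congrArg (eval t) hE
    simpa using this
  have hq1 : q.eval 1 = 1 := hP1
  have hq0 : q ≠ 0 := fun h0 => by simp [h0] at hq1
  -- derivative at 1
  have hd1 : (derivative q).eval 1 = lam / a := by
    have := hEt 1
    field_simp
    nlinarith [this]
  -- symmetry
  have hWzero : ∀ W : ℝ[X], (1 - X ^ 2) * derivative W = C a * (X * W) → W = 0 :=
    fun W h => aux_W_zero ha0 W h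
  have hw := aux_wronskian q (q.comp (-X)) hE (aux_comp_ode q hE) hWzero
  obtain ⟨c, hc⟩ := aux_prop hq0 hw
  have hceval : ∀ t : ℝ, q.eval (-t) = c * q.eval t := by
    intro t
    have := congrArg (eval t) hc
    simpa [eval_comp] using this
  have hcval : q.eval (-1) = c := by
    have := hceval 1
    rw [hq1] at this; simpa using this
  have hc2 : c ^ 2 = 1 := by
    have := hceval (-1)
    rw [neg_neg, hq1, hcval] at this
    nlinarith [this]
  -- derivative at -1
  have hdm1 : (derivative q).eval (-1) = -c * (lam / a) := by
    have hder := congrArg derivative hc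
    rw [derivative_comp, derivative_mul] at hder
    simp only [derivative_neg, derivative_X, derivative_C, zero_mul, zero_add] at hder
    have := congrArg (eval 1) hder
    simp only [eval_mul, eval_neg, eval_one, eval_comp, eval_X, eval_C, neg_mul, one_mul] at this
    rw [hd1] at this
    linarith [this]
  -- bound |q| ≤ 1 on [-1,1]
  have habs : ∀ t ∈ Set.Icc (-1:ℝ) 1, (q.eval t) ^ 2 ≤ 1 := by
    apply aux_bound ha2 hlam q hE
    · rw [hq1]; norm_num
    · rw [hcval, hc2]
  -- the target value m
  set m : ℝ := -((((k : ℝ) - 1) * ((k : ℝ) + (n : ℝ) - 1)) / ((n : ℝ) - 1)) with hmdef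
  have hm : m = 1 - lam / a := by
    rw [hmdef, hadef, hlamdef]
    have hne : (n:ℝ) - 1 ≠ 0 := by linarith
    field_simp
    ring
  have hm1 : m ≤ -1 := by
    rw [hm]
    have : 2 ≤ lam / a := by
      rw [le_div_iff₀ ha0]; linarith
    linarith
  -- the function G
  set G : ℝ[X] := q - X * derivative q with hG
  have hGval : ∀ t : ℝ, G.eval t = q.eval t - t * (derivative q).eval t := by
    intro t; rw [hG]; simp
  have hG1 : G.eval 1 = m := by
    rw [hGval, hq1, hd1, hm]; ring
  have hGm1 : G.eval (-1) = c * m := by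
    rw [hGval, hcval, hdm1, hm]; ring
  have hGderiv : derivative G = -(X * derivative (derivative q)) := by
    rw [hG, derivative_sub, derivative_mul, derivative_X]
    ring
  constructor
  · -- main inequality
    have key : ∀ t ∈ Set.Icc (-1:ℝ) 1, m ≤ G.eval t := by
      obtain ⟨t₀, ht₀, hmin⟩ := (isCompact_Icc (a := (-1:ℝ)) (b := 1)).exists_isMinOn
        (Set.nonempty_Icc.mpr (by norm_num)) G.continuousOn
      have hsuff : m ≤ G.eval t₀ → ∀ t ∈ Set.Icc (-1:ℝ) 1, m ≤ G.eval t := by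
        intro h t ht
        exact le_trans h (hmin ht)
      apply hsuff
      rcases eq_or_lt_of_le ht₀.1 with h1 | h1
      · -- t₀ = -1
        rw [← h1, hGm1]
        have hcle : c ≤ 1 := by nlinarith [sq_nonneg (c - 1)]
        nlinarith [mul_nonneg (sub_nonneg.mpr hcle) (neg_nonneg.mpr (by linarith : m ≤ 0))]
      rcases eq_or_lt_of_le ht₀.2 with h2 | h2
      · -- t₀ = 1
        rw [h2, hG1]
      -- interior
      have hloc : IsLocalMin (fun t => G.eval t) t₀ :=
        hmin.isLocalMin (Icc_mem_nhds h1 h2)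
      have hder0 : (derivative G).eval t₀ = 0 := by
        rw [← Polynomial.deriv]
        exact hloc.deriv_eq_zero
      rw [hGderiv] at hder0
      simp only [eval_neg, eval_mul, eval_X, neg_eq_zero] at hder0
      rcases mul_eq_zero.mp hder0 with h0 | h0
      · -- t₀ = 0
        rw [h0]
        have := habs 0 (by norm_num)
        rw [hGval]
        nlinarith [this]
      · -- q'' t₀ = 0
        have hode := hEt t₀
        rw [h0] at hode
        have ht₀q : t₀ * (derivative q).eval t₀ = lam * q.eval t₀ / a := by
          field_simp
          nlinarith [hode]
        rw [hGval, ht₀q]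
        have hb := habs t₀ ht₀
        have hup : q.eval t₀ ≤ 1 := by nlinarith [hb]
        have : q.eval t₀ - lam * q.eval t₀ / a = q.eval t₀ * m := by
          rw [hm]; field_simp
        rw [this]
        nlinarith [hup, hm1]
    intro t ht
    rw [show (fun t => q.eval t) t - t * deriv (fun t => q.eval t) t
      = G.eval t by rw [hGval, Polynomial.deriv]]
    exact key t ht
  · -- value at 1
    rw [show deriv (fun t => q.eval t) 1 = (derivative q).eval 1 from Polynomial.deriv q]
    show q.eval 1 - 1 * (derivative q).eval 1 = m
    rw [hq1, hd1, hm]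
    ring
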